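/- Suppose the matrices M_1,…,M_r satisfy conditions (H0), (H1), (H2) and (H3). Let p ∈ ℤ^r and let w_1, w_2 ∈ W_l. Then there exist l' ≥ l and words w_1', w_2' ∈ W_{l'} such that w_1'|[0,l] = w_1, w_2'|[0,l] = w_2, and the translate τ_p w_1' and w_2' do not agree on [0,l'] ∩ [p, p+l']. -/
import Mathlib


open Matrix

variable {r : ℕ} {A : Type*}

/-- The `j`-th standard basis vector of `ℤ^r`. -/
def evec (r : ℕ) (j : Fin r) : Fin r → ℤ := fun i => if i = j then 1 else 0

/-- `w` represents a word of shape `m` (only its values on `[0,m]` matter):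
`m ≥ 0` and the transition matrices are respected on the box `[0,m]`. -/
def IsWord (M : Fin r → Matrix A A ℤ) (m : Fin r → ℤ) (w : (Fin r → ℤ) → A) : Prop :=
  0 ≤ m ∧ ∀ (l : Fin r → ℤ) (j : Fin r), 0 ≤ l → l + evec r j ≤ m →
    M j (w (l + evec r j)) (w l) = 1

/-- Two representing functions agree on the box `[0,m]`; this is equality of
words of shape `m`. -/
def AgreeOn (m : Fin r → ℤ) (w w' : (Fin r → ℤ) → A) : Prop :=
  ∀ l : Fin r → ℤ, 0 ≤ l → l ≤ m → w l = w' l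

/-- The restriction `w|[k,k+n]`, as a word based at `0`: `(restrictW k w) i = w (i + k)`. -/
def restrictW (k : Fin r → ℤ) (w : (Fin r → ℤ) → A) : (Fin r → ℤ) → A :=
  fun i => w (i + k)

/-- `w` (a word of shape `m`) is `p`-periodic: the translate `τ_p w`, given by
`(τ_p w)(x) = w (x - p)`, agrees with `w` on `[0,m] ∩ [p,p+m]`. -/
def IsPeriodic (p m : Fin r → ℤ) (w : (Fin r → ℤ) → A) : Prop :=
  ∀ x : Fin r → ℤ, 0 ≤ x → x ≤ m → p ≤ x → x ≤ p + m → w (x - p) = w x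

/-- Condition (H0): each `M j` is nonzero. -/
def H0 (M : Fin r → Matrix A A ℤ) : Prop := ∀ j, M j ≠ 0

/-- Condition (H1): unique products of words. -/
def H1 (M : Fin r → Matrix A A ℤ) : Prop :=
  ∀ (m n : Fin r → ℤ) (u v : (Fin r → ℤ) → A),
    IsWord M m u → IsWord M n v → u m = v 0 →
      (∃ w, IsWord M (m + n) w ∧ AgreeOn m w u ∧ AgreeOn n (restrictW m w) v) ∧
      (∀ w w', IsWord M (m + n) w → AgreeOn m w u → AgreeOn n (restrictW m w) v →
        IsWord M (m + n) w' → AgreeOn m w' u → AgreeOn n (restrictW m w') v →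
        AgreeOn (m + n) w w')

/-- Condition (H2): the directed graph on `A` with an edge `a → b` whenever
`M i b a = 1` for some `i` is irreducible. -/
def H2 (M : Fin r → Matrix A A ℤ) : Prop :=
  ∀ a b : A, Relation.ReflTransGen (fun x y => ∃ i, M i y x = 1) a b

/-- Condition (H3): for each nonzero `p ∈ ℤ^r` there is a non-`p`-periodic word. -/
def H3 (M : Fin r → Matrix A A ℤ) : Prop :=
  ∀ p : Fin r → ℤ, p ≠ 0 → ∃ (m : Fin r → ℤ) (w : (Fin r → ℤ) → A),
    IsWord M m w ∧ ¬ IsPeriodic p m w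

/-- Condition (H1a): the matrices commute. -/
def H1a [Fintype A] (M : Fin r → Matrix A A ℤ) : Prop :=
  ∀ i j, M i * M j = M j * M i

/-- Condition (H1b): for `i < j`, the entries of `M i * M j` lie in `{0,1}`. -/
def H1b [Fintype A] (M : Fin r → Matrix A A ℤ) : Prop :=
  ∀ i j, i < j → ∀ a b : A, (M i * M j) b a = 0 ∨ (M i * M j) b a = 1

/-- Condition (H1c): for `i < j < k`, the entries of `M i * M j * M k` lie in `{0,1}`. -/
def H1c [Fintype A] (M : Fin r → Matrix A A ℤ) : Prop :=
  ∀ i j k, i < j → j < k → ∀ a b : A,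
    (M i * M j * M k) b a = 0 ∨ (M i * M j * M k) b a = 1

/-- Condition (H3*). -/
def H3star (M : Fin r → Matrix A A ℤ) : Prop :=
  ∀ (j : Fin r) (m : Fin r → ℤ), m j = 0 → ∀ w : (Fin r → ℤ) → A, IsWord M m w →
    ∃ u u', IsWord M (m + evec r j) u ∧ IsWord M (m + evec r j) u' ∧
      AgreeOn m u w ∧ AgreeOn m u' w ∧ u (evec r j) ≠ u' (evec r j)

/-- `x` represents the product word `uv` of `u ∈ W_m` and `v ∈ W_n`. -/
def IsProd (M : Fin r → Matrix A A ℤ) (m n : Fin r → ℤ)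
    (u v x : (Fin r → ℤ) → A) : Prop :=
  IsWord M (m + n) x ∧ AgreeOn m x u ∧ AgreeOn n (restrictW m x) v

-- ======= auxiliary lemmas =======

lemma pile {m m' : Fin r → ℤ} (h : m ≤ m') (i : Fin r) : m i ≤ m' i := h i

lemma pile0 {m : Fin r → ℤ} (h : 0 ≤ m) (i : Fin r) : 0 ≤ m i := h i

lemma pile_intro {m m' : Fin r → ℤ} (h : ∀ i, m i ≤ m' i) : m ≤ m' := h

lemma pile0_intro {m : Fin r → ℤ} (h : ∀ i, 0 ≤ m i) : (0 : Fin r → ℤ) ≤ m := h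

lemma evec_app (j i : Fin r) : evec r j i = if i = j then 1 else 0 := rfl

lemma evec_self (j : Fin r) : evec r j j = 1 := if_pos rfl

lemma evec_ne {j i : Fin r} (h : i ≠ j) : evec r j i = 0 := if_neg h

lemma zero_app (i : Fin r) : (0 : Fin r → ℤ) i = 0 := rfl

lemma smul_app (c : ℤ) (m : Fin r → ℤ) (i : Fin r) : (c • m) i = c * m i := rfl

lemma evec_nonneg (j : Fin r) : (0 : Fin r → ℤ) ≤ evec r j :=
  pile0_intro fun i => by rw [evec_app]; split <;> norm_num

lemma add_app (m m' : Fin r → ℤ) (i : Fin r) : (m + m') i = m i + m' i := rfl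

lemma sub_app (m m' : Fin r → ℤ) (i : Fin r) : (m - m') i = m i - m' i := rfl

lemma agree_comp {m m' : Fin r → ℤ} {w v u : (Fin r → ℤ) → A}
    (h : AgreeOn m' w v) (h' : AgreeOn m v u) (hm : m ≤ m') : AgreeOn m w u :=
  fun l hl0 hlm => (h l hl0 (le_trans hlm hm)).trans (h' l hl0 hlm)

lemma isWord_const (M : Fin r → Matrix A A ℤ) (a : A) : IsWord M 0 (fun _ => a) := by
  refine ⟨le_refl _, fun l j hl0 hle => ?_⟩
  exfalso
  have h1 := pile hle j
  have h2 := pile0 hl0 j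
  rw [add_app, evec_self, zero_app] at h1
  omega

lemma concat_edge {M : Fin r → Matrix A A ℤ} (h1 : H1 M) {m : Fin r → ℤ}
    {u : (Fin r → ℤ) → A} (hu : IsWord M m u) (j : Fin r) {b : A}
    (hb : M j b (u m) = 1) :
    ∃ w, IsWord M (m + evec r j) w ∧ AgreeOn m w u ∧ w (m + evec r j) = b := by
  classical
  set v : (Fin r → ℤ) → A := fun x => if x = 0 then u m else b with hv
  have hvword : IsWord M (evec r j) v := by
    refine ⟨evec_nonneg j, fun l j' hl0 hle => ?_⟩
    have hj' : j' = j := by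
      by_contra hne
      have ha := pile hle j'
      have hb' := pile0 hl0 j'
      rw [add_app, evec_self, evec_ne hne] at ha
      omega
    have hl : l = 0 := by
      funext i
      have ha := pile hle i
      have hb' := pile0 hl0 i
      rw [hj', add_app] at ha
      rw [zero_app]
      by_cases hij : i = j
      · subst hij
        rw [evec_self] at ha
        omega
      · rw [evec_ne hij] at ha
        omega
    rw [hj', hl]
    have h1v : v (0 + evec r j) = b := by
      have hne : (0 : Fin r → ℤ) + evec r j ≠ 0 := by
        intro h
        have := congrFun h j
        simp [evec] at this
      simp only [hv, if_neg hne]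
    have h2v : v 0 = u m := by simp only [hv, if_pos rfl]
    rw [h1v, h2v]
    exact hb
  have hum : u m = v 0 := by simp only [hv, if_pos rfl]
  obtain ⟨w, hw, hwu, hwv⟩ := (h1 m (evec r j) u v hu hvword hum).1
  refine ⟨w, hw, hwu, ?_⟩
  have hres := hwv (evec r j) (evec_nonneg j) (le_refl _)
  have hne : evec r j ≠ 0 := by
    intro h; have := congrFun h j; simp [evec] at this
  simp only [restrictW, hv, if_neg hne] at hres
  rw [add_comm] at hres
  exact hres

lemma append_chain {M : Fin r → Matrix A A ℤ} (h1 : H1 M) {m : Fin r → ℤ}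
    {u : (Fin r → ℤ) → A} (hu : IsWord M m u) {b : A}
    (h : Relation.ReflTransGen (fun x y => ∃ i, M i y x = 1) (u m) b) :
    ∃ m' w, m ≤ m' ∧ IsWord M m' w ∧ AgreeOn m w u ∧ w m' = b := by
  induction h with
  | refl => exact ⟨m, u, le_refl _, hu, fun l _ _ => rfl, rfl⟩
  | @tail c b hc he ih =>
    obtain ⟨m', w, hm', hw, hwu, hwc⟩ := ih
    obtain ⟨i, hi⟩ := he
    have hi' : M i b (w m') = 1 := by rw [hwc]; exact hi
    obtain ⟨w', hw', hw'w, hw't⟩ := concat_edge h1 hw i hi'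
    refine ⟨m' + evec r i, w', ?_, hw', agree_comp hw'w hwu hm', hw't⟩
    exact le_trans hm' (le_add_of_nonneg_right (evec_nonneg i))

lemma edge_exists {M : Fin r → Matrix A A ℤ}
    (hM : ∀ j (a b : A), M j b a = 0 ∨ M j b a = 1) (h0 : H0 M) (j : Fin r) :
    ∃ a b : A, M j b a = 1 := by
  by_contra h
  push_neg at h
  refine h0 j ?_
  ext b a
  rcases hM j a b with h' | h'
  · simpa using h'
  · exact absurd h' (h a b)

lemma succ_exists [Nonempty A] {M : Fin r → Matrix A A ℤ}
    (hM : ∀ j (a b : A), M j b a = 0 ∨ M j b a = 1) (h0 : H0 M) (h1 : H1 M)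
    (h2 : H2 M) (j : Fin r) (a : A) : ∃ b, M j b a = 1 := by
  obtain ⟨a₀, b₀, hab⟩ := edge_exists hM h0 j
  obtain ⟨m, w, hm, hw, hwu, hwt⟩ := append_chain h1 (isWord_const M a) (h2 a a₀)
  have hb : M j b₀ (w m) = 1 := by rw [hwt]; exact hab
  obtain ⟨w', hw', hw'w, _⟩ := concat_edge h1 hw j hb
  have h00 : (0 : Fin r → ℤ) ≤ 0 := le_refl _
  have hcond : (0 : Fin r → ℤ) + evec r j ≤ m + evec r j := by
    refine pile_intro fun i => ?_
    have hmi := pile0 hw.1 i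
    rw [add_app, add_app, zero_app]
    omega
  have hcond2 := hw'.2 0 j h00 hcond
  have hw'0 : w' 0 = a := by
    have ha1 := hw'w 0 h00 hw.1
    have ha2 := hwu 0 h00 h00
    rw [ha1, ha2]
  rw [hw'0] at hcond2
  exact ⟨w' (0 + evec r j), hcond2⟩

lemma pred_exists [Nonempty A] {M : Fin r → Matrix A A ℤ}
    (hM : ∀ j (a b : A), M j b a = 0 ∨ M j b a = 1) (h0 : H0 M) (h1 : H1 M)
    (h2 : H2 M) (j : Fin r) (a : A) : ∃ b, M j a b = 1 := by
  classical
  obtain ⟨a₀, b₀, hab⟩ := edge_exists hM h0 j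
  obtain ⟨w, hw, hwu, hwt⟩ := concat_edge h1 (isWord_const M a₀) j
    (by simpa using hab)
  rw [zero_add] at hw hwt
  have hrt : Relation.ReflTransGen (fun x y => ∃ i, M i y x = 1) (w (evec r j)) a := by
    rw [hwt]; exact h2 b₀ a
  obtain ⟨m', w', hm', hw', hw'w, hw't⟩ := append_chain h1 hw hrt
  have hl0 : (0 : Fin r → ℤ) ≤ m' - evec r j := by
    refine pile0_intro fun i => ?_
    have := pile hm' i
    rw [sub_app]
    omega
  have hle : (m' - evec r j) + evec r j ≤ m' := by
    refine pile_intro fun i => ?_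
    rw [add_app, sub_app]
    omega
  have hcond := hw'.2 (m' - evec r j) j hl0 hle
  have heq : (m' - evec r j) + evec r j = m' := by funext i; rw [add_app, sub_app]; ring
  rw [heq, hw't] at hcond
  exact ⟨w' (m' - evec r j), hcond⟩

lemma extend_to {M : Fin r → Matrix A A ℤ}
    [Nonempty A] (hM : ∀ j (a b : A), M j b a = 0 ∨ M j b a = 1) (h0 : H0 M)
    (h1 : H1 M) (h2 : H2 M) :
    ∀ n : ℕ, ∀ m m' : Fin r → ℤ, ∀ u : (Fin r → ℤ) → A, IsWord M m u → m ≤ m' →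
      (∑ j, (m' j - m j).toNat) = n → ∃ w, IsWord M m' w ∧ AgreeOn m w u := by
  intro n
  induction n with
  | zero =>
    intro m m' u hu hmm hsum
    have hkey : m' = m := by
      funext i
      have hz : (m' i - m i).toNat = 0 :=
        (Finset.sum_eq_zero_iff.mp hsum) i (Finset.mem_univ i)
      have := pile hmm i
      omega
    rw [hkey]
    exact ⟨u, hu, fun l _ _ => rfl⟩
  | succ n ih =>
    intro m m' u hu hmm hsum
    have hex : ∃ j, m j < m' j := by
      by_contra h
      push_neg at h
      have : (∑ j, (m' j - m j).toNat) = 0 := by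
        apply Finset.sum_eq_zero
        intro i _
        have := h i
        omega
      omega
    obtain ⟨j, hj⟩ := hex
    obtain ⟨b, hb⟩ := succ_exists hM h0 h1 h2 j (u m)
    obtain ⟨w₁, hw₁, hw₁u, _⟩ := concat_edge h1 hu j hb
    have hle : m + evec r j ≤ m' := by
      refine pile_intro fun i => ?_
      have := pile hmm i
      rw [add_app]
      by_cases hij : i = j
      · subst hij
        rw [evec_self]
        omega
      · rw [evec_ne hij]
        omega
    have hsum' : (∑ i, (m' i - (m + evec r j) i).toNat) = n := by
      rw [← Finset.add_sum_erase Finset.univ _ (Finset.mem_univ j)] at hsum ⊢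
      have e1 : ∑ i ∈ Finset.univ.erase j, (m' i - (m + evec r j) i).toNat
          = ∑ i ∈ Finset.univ.erase j, (m' i - m i).toNat := by
        apply Finset.sum_congr rfl
        intro i hi
        have hij := Finset.ne_of_mem_erase hi
        rw [add_app, evec_ne hij, add_zero]
      rw [e1]
      have e2 : (m' j - (m + evec r j) j).toNat = (m' j - m j).toNat - 1 := by
        rw [add_app, evec_self]
        omega
      rw [e2]
      have : (m' j - m j).toNat ≥ 1 := by omega
      omega
    obtain ⟨w, hw, hwu⟩ := ih (m + evec r j) m' w₁ hw₁ hle hsum'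
    exact ⟨w, hw, agree_comp hwu hw₁u (le_add_of_nonneg_right (evec_nonneg j))⟩

lemma extend_to' {M : Fin r → Matrix A A ℤ}
    [Nonempty A] (hM : ∀ j (a b : A), M j b a = 0 ∨ M j b a = 1) (h0 : H0 M)
    (h1 : H1 M) (h2 : H2 M) {m m' : Fin r → ℤ} {u : (Fin r → ℤ) → A}
    (hu : IsWord M m u) (hmm : m ≤ m') :
    ∃ w, IsWord M m' w ∧ AgreeOn m w u :=
  extend_to hM h0 h1 h2 _ m m' u hu hmm rfl

lemma push_j [Nonempty A] {M : Fin r → Matrix A A ℤ}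
    (hM : ∀ j (a b : A), M j b a = 0 ∨ M j b a = 1) (h0 : H0 M) (h1 : H1 M)
    (h2 : H2 M) {m : Fin r → ℤ} {u : (Fin r → ℤ) → A} (hu : IsWord M m u)
    (j : Fin r) (T : ℤ) :
    ∃ m' w, m ≤ m' ∧ T ≤ m' j ∧ IsWord M m' w ∧ AgreeOn m w u ∧ w m' = u m := by
  have key : ∀ K : ℕ, ∃ m' w, m ≤ m' ∧ m j + K ≤ m' j ∧ IsWord M m' w ∧
      AgreeOn m w u ∧ w m' = u m := by
    intro K
    induction K with
    | zero => exact ⟨m, u, le_refl _, by omega, hu, fun l _ _ => rfl, rfl⟩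
    | succ K ih =>
      obtain ⟨m', w, hm', hmj, hw, hwu, hwt⟩ := ih
      obtain ⟨d, hd⟩ := succ_exists hM h0 h1 h2 j (u m)
      have hd' : M j d (w m') = 1 := by rw [hwt]; exact hd
      obtain ⟨w₂, hw₂, hw₂w, hw₂t⟩ := concat_edge h1 hw j hd'
      have hrt : Relation.ReflTransGen (fun x y => ∃ i, M i y x = 1)
          (w₂ (m' + evec r j)) (u m) := by rw [hw₂t]; exact h2 d (u m)
      obtain ⟨m₃, w₃, hm₃, hw₃, hw₃w, hw₃t⟩ := append_chain h1 hw₂ hrt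
      have h1' : m' ≤ m' + evec r j := le_add_of_nonneg_right (evec_nonneg j)
      refine ⟨m₃, w₃, le_trans hm' (le_trans h1' hm₃), ?_, hw₃,
        agree_comp (agree_comp hw₃w hw₂w h1') hwu hm', hw₃t⟩
      have hh := pile hm₃ j
      rw [add_app, evec_self] at hh
      push_cast
      omega
  obtain ⟨m', w, hm', hmj, hw, hwu, hwt⟩ := key (T - m j).toNat
  refine ⟨m', w, hm', ?_, hw, hwu, hwt⟩
  have := Int.self_le_toNat (T - m j)
  omega

lemma push_all [Nonempty A] {M : Fin r → Matrix A A ℤ}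
    (hM : ∀ j (a b : A), M j b a = 0 ∨ M j b a = 1) (h0 : H0 M) (h1 : H1 M)
    (h2 : H2 M) {m : Fin r → ℤ} {u : (Fin r → ℤ) → A} (hu : IsWord M m u)
    (P : Fin r → ℤ) :
    ∃ m' w, m ≤ m' ∧ P ≤ m' ∧ IsWord M m' w ∧ AgreeOn m w u ∧ w m' = u m := by
  have key : ∀ k : ℕ, ∃ m' w, m ≤ m' ∧ (∀ j : Fin r, (j : ℕ) < k → P j ≤ m' j) ∧
      IsWord M m' w ∧ AgreeOn m w u ∧ w m' = u m := by
    intro k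
    induction k with
    | zero => exact ⟨m, u, le_refl _, fun j hj => absurd hj (by omega), hu,
        fun l _ _ => rfl, rfl⟩
    | succ k ih =>
      obtain ⟨m', w, hm', hP, hw, hwu, hwt⟩ := ih
      by_cases hk : k < r
      · obtain ⟨m₂, w₂, hm₂, hT, hw₂, hw₂w, hw₂t⟩ := push_j hM h0 h1 h2 hw ⟨k, hk⟩
          (P ⟨k, hk⟩)
        refine ⟨m₂, w₂, le_trans hm' hm₂, ?_, hw₂, agree_comp hw₂w hwu hm', ?_⟩
        · intro j hj
          rcases Nat.lt_or_ge (j : ℕ) k with h | h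
          · exact le_trans (hP j h) (pile hm₂ j)
          · have hjk : j = ⟨k, hk⟩ := by
              apply Fin.ext
              have hv : ((⟨k, hk⟩ : Fin r) : ℕ) = k := rfl
              omega
            rw [hjk]; exact hT
        · rw [hw₂t, hwt]
      · refine ⟨m', w, hm', fun j _ => hP j ?_, hw, hwu, hwt⟩
        have := j.isLt
        omega
  obtain ⟨m', w, hm', hP, hw, hwu, hwt⟩ := key r
  exact ⟨m', w, hm', pile_intro fun j => hP j j.isLt, hw, hwu, hwt⟩

lemma branching [Fintype A] [Nonempty A] (hr : 0 < r) {M : Fin r → Matrix A A ℤ}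
    (hM : ∀ j (a b : A), M j b a = 0 ∨ M j b a = 1) (h0 : H0 M) (h1 : H1 M)
    (h2 : H2 M) (h3 : H3 M) :
    ∃ (j : Fin r) (c d d' : A), M j d c = 1 ∧ M j d' c = 1 ∧ d ≠ d' := by
  classical
  by_contra hbr
  push_neg at hbr
  have hdet : ∀ (j : Fin r) (c d d' : A), M j d c = 1 → M j d' c = 1 → d = d' := by
    intro j c d d' hd hd'
    by_contra hne
    exact hne (hbr j c d d' hd hd')
  set j₁ : Fin r := ⟨0, hr⟩ with hj₁
  have hf : ∀ a : A, ∃ b, M j₁ b a = 1 := succ_exists hM h0 h1 h2 j₁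
  choose f hfspec using hf
  have hsurj : Function.Surjective f := by
    intro a
    obtain ⟨b, hb⟩ := pred_exists hM h0 h1 h2 j₁ a
    exact ⟨b, hdet j₁ b (f b) a (hfspec b) hb⟩
  have hbij : Function.Bijective f := Finite.surjective_iff_bijective.mp hsurj
  set e : Equiv.Perm A := Equiv.ofBijective f hbij with he
  set N : ℕ := orderOf e with hN
  have hNpos : 0 < N := orderOf_pos e
  have heN : e ^ N = 1 := pow_orderOf_eq_one e
  have hiter : ∀ (n : ℕ) (a : A), f^[n] a = (e ^ n) a := by
    intro n
    induction n with
    | zero => intro a; simp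
    | succ n ih =>
      intro a
      rw [Function.iterate_succ_apply, ih (f a), pow_succ, Equiv.Perm.mul_apply]
      rfl
  set p : Fin r → ℤ := fun i => if i = j₁ then (N : ℤ) else 0 with hp
  have hpne : p ≠ 0 := by
    intro h
    have := congrFun h j₁
    simp only [hp, if_pos rfl, Pi.zero_apply] at this
    omega
  obtain ⟨m, w, hw, hnper⟩ := h3 p hpne
  apply hnper
  intro x hx0 hxm hpx hxpm
  have key : ∀ k : ℕ, k ≤ N → w (x - p + (k : ℤ) • evec r j₁)
      = f^[k] (w (x - p)) := by
    intro k
    induction k with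
    | zero => intro _; simp
    | succ k ih =>
      intro hk
      have hkN := ih (by omega)
      set l : Fin r → ℤ := x - p + (k : ℤ) • evec r j₁ with hl
      have hl0 : (0 : Fin r → ℤ) ≤ l := by
        refine pile0_intro fun i => ?_
        have h1i := pile hpx i
        rw [hl, add_app, sub_app]
        rw [smul_app]
        have hpi : p i = if i = j₁ then (N : ℤ) else 0 := rfl
        rw [hpi] at h1i ⊢
        by_cases hij : i = j₁
        · subst hij
          rw [if_pos rfl] at h1i
          rw [if_pos rfl, evec_self]
          omega
        · rw [if_neg hij] at h1i
          rw [if_neg hij, evec_ne hij]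
          omega
      have hle : l + evec r j₁ ≤ m := by
        refine pile_intro fun i => ?_
        have h1i := pile hxm i
        have h2i := pile hxpm i
        rw [add_app] at h2i
        rw [hl, add_app, add_app, sub_app, smul_app]
        have hpi : p i = if i = j₁ then (N : ℤ) else 0 := rfl
        rw [hpi] at h2i ⊢
        by_cases hij : i = j₁
        · subst hij
          rw [if_pos rfl] at h2i
          rw [if_pos rfl]
          simp only [evec_self]
          omega
        · rw [if_neg hij] at h2i
          rw [if_neg hij]
          simp only [evec_ne hij]
          omega
      have hword := hw.2 l j₁ hl0 hle
      have hfw : M j₁ (f (w l)) (w l) = 1 := hfspec (w l)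
      have heq1 : w (l + evec r j₁) = f (w l) := hdet j₁ (w l) _ _ hword hfw
      have heq2 : l + evec r j₁ = x - p + ((k : ℤ) + 1) • evec r j₁ := by
        funext i
        simp only [hl, add_app, sub_app, smul_app]
        ring
      have hcast : ((k + 1 : ℕ) : ℤ) = (k : ℤ) + 1 := by push_cast; ring
      calc w (x - p + ((k + 1 : ℕ) : ℤ) • evec r j₁)
          = w (l + evec r j₁) := by rw [hcast, heq2]
        _ = f (w l) := heq1
        _ = f (f^[k] (w (x - p))) := by rw [hkN]
        _ = f^[k + 1] (w (x - p)) := (Function.iterate_succ_apply' f k _).symm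
  have hfin := key N (le_refl N)
  have hxeq : x - p + ((N : ℕ) : ℤ) • evec r j₁ = x := by
    funext i
    rw [add_app, sub_app]
    rw [smul_app, evec_app]
    have hpi : p i = if i = j₁ then (N : ℤ) else 0 := rfl
    rw [hpi]
    by_cases hij : i = j₁
    · rw [if_pos hij, if_pos hij]; ring
    · rw [if_neg hij, if_neg hij]; ring
  rw [hxeq] at hfin
  rw [hfin, hiter N, heN]
  rfl

/-- under (H0)-(H3), any `w₁, w₂ ∈ W_l` extend to words
`w₁', w₂' ∈ W_{l'}`, `l' ≥ l`, such that `τ_p w₁'` and `w₂'` do not agree on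
`[0,l'] ∩ [p,p+l']`. -/
theorem stmt_15 [Fintype A] [Nonempty A] (hr : 0 < r)
    (M : Fin r → Matrix A A ℤ)
    (hM : ∀ j (a b : A), M j b a = 0 ∨ M j b a = 1)
    (h0 : H0 M) (h1 : H1 M) (h2 : H2 M) (h3 : H3 M)
    (p l : Fin r → ℤ) (w₁ w₂ : (Fin r → ℤ) → A)
    (hw1 : IsWord M l w₁) (hw2 : IsWord M l w₂) :
    ∃ (l' : Fin r → ℤ) (w₁' w₂' : (Fin r → ℤ) → A),
      l ≤ l' ∧ IsWord M l' w₁' ∧ IsWord M l' w₂' ∧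
      AgreeOn l w₁' w₁ ∧ AgreeOn l w₂' w₂ ∧
      ∃ x : Fin r → ℤ, 0 ≤ x ∧ x ≤ l' ∧ p ≤ x ∧ x ≤ p + l' ∧
        w₁' (x - p) ≠ w₂' x := by
  classical
  obtain ⟨j₀, c₀, d, d', hd, hd', hdd⟩ := branching hr hM h0 h1 h2 h3
  obtain ⟨m₁, v₁, hm₁, hv₁, hv₁w, hv₁t⟩ := append_chain h1 hw2 (h2 (w₂ l) c₀)
  obtain ⟨m₂, v₂, hm₂, hPm₂, hv₂, hv₂v, hv₂t⟩ := push_all hM h0 h1 h2 hv₁ p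
  have hdc : M j₀ d (v₂ m₂) = 1 := by rw [hv₂t, hv₁t]; exact hd
  have hdc' : M j₀ d' (v₂ m₂) = 1 := by rw [hv₂t, hv₁t]; exact hd'
  obtain ⟨B, hB, hBv, hBt⟩ := concat_edge h1 hv₂ j₀ hdc
  obtain ⟨B', hB', hB'v, hB't⟩ := concat_edge h1 hv₂ j₀ hdc'
  set x : Fin r → ℤ := m₂ + evec r j₀ with hx
  set q : Fin r → ℤ := fun i => max (-(p i)) 0 with hq
  set l' : Fin r → ℤ := x + q with hl'
  have hq0 : (0 : Fin r → ℤ) ≤ q := pile0_intro fun i => le_max_right _ _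
  have hxl' : x ≤ l' := le_add_of_nonneg_right hq0
  obtain ⟨B₁, hB₁, hB₁B⟩ := extend_to' hM h0 h1 h2 hB hxl'
  obtain ⟨B₂, hB₂, hB₂B⟩ := extend_to' hM h0 h1 h2 hB' hxl'
  have hm₂x : m₂ ≤ x := le_add_of_nonneg_right (evec_nonneg j₀)
  have hlm₂ : l ≤ m₂ := le_trans hm₁ hm₂
  have hlx : l ≤ x := le_trans hlm₂ hm₂x
  have hll' : l ≤ l' := le_trans hlx hxl'
  obtain ⟨w₁', hw₁', hw₁'w⟩ := extend_to' hM h0 h1 h2 hw1 hll'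
  have h0x : (0 : Fin r → ℤ) ≤ x := le_trans hw2.1 hlx
  have hB₁x : B₁ x = d := by rw [hB₁B x h0x (le_refl x), hBt]
  have hB₂x : B₂ x = d' := by rw [hB₂B x h0x (le_refl x), hB't]
  have hA1 : AgreeOn m₁ B v₁ := agree_comp hBv hv₂v hm₂
  have hA2 : AgreeOn l B w₂ := agree_comp hA1 hv₁w hm₁
  have hagB₁ : AgreeOn l B₁ w₂ := agree_comp hB₁B hA2 hlx
  have hA1' : AgreeOn m₁ B' v₁ := agree_comp hB'v hv₂v hm₂
  have hA2' : AgreeOn l B' w₂ := agree_comp hA1' hv₁w hm₁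
  have hagB₂ : AgreeOn l B₂ w₂ := agree_comp hB₂B hA2' hlx
  have hpx : p ≤ x := le_trans hPm₂ hm₂x
  have hxpl' : x ≤ p + l' := by
    refine pile_intro fun i => ?_
    have h1i : -(p i) ≤ q i := le_max_left _ _
    have h2i : l' i = x i + q i := rfl
    rw [add_app, h2i]
    omega
  by_cases hc : B₁ x = w₁' (x - p)
  · refine ⟨l', w₁', B₂, hll', hw₁', hB₂, hw₁'w, hagB₂, x, h0x, hxl', hpx, hxpl', ?_⟩
    rw [hB₂x, ← hc, hB₁x]
    exact hdd
  · exact ⟨l', w₁', B₁, hll', hw₁', hB₁, hw₁'w, hagB₁, x, h0x, hxl', hpx, hxpl',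
      fun h => hc h.symm⟩
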